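/- Let X be a complex Banach space and T : X → X a power bounded linear operator. Set X₀ = {x ∈ X : Tⁿx → 0}. If X₀ ≠ X, then for every ε > 0 there exist λ ∈ Γ and x ∈ X with ‖Tx − λx‖ < ε and ‖Tⁿx‖ > 1 − ε for all n ≥ 0 (i.e., T has ε-slow vectors for every ε > 0). -/

import Mathlib

open Filter BoundedContinuousFunction

noncomputable section

set_option maxHeartbeats 1000000
set_option synthInstance.maxHeartbeats 400000

namespace SlowAux

variable (X : Type*) [NormedAddCommGroup X] [NormedSpace ℂ X]

def nullS : Submodule ℂ (ℕ →ᵇ X) where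
  carrier := {f | Tendsto (⇑f) atTop (nhds 0)}
  add_mem' := by intro a b ha hb; have := ha.add hb; rw [add_zero] at this; exact this
  zero_mem' := by show Tendsto _ atTop (nhds 0); exact tendsto_const_nhds
  smul_mem' := by intro c f hf; simpa using hf.const_smul c

lemma mem_nullS_iff {f : ℕ →ᵇ X} : f ∈ nullS X ↔ Tendsto (⇑f) atTop (nhds 0) := Iff.rfl


instance nullS_isClosed : IsClosed ((nullS X : Submodule ℂ (ℕ →ᵇ X)) : Set (ℕ →ᵇ X)) := by
  rw [← isSeqClosed_iff_isClosed]
  intro f g hf hfg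
  show Tendsto (⇑g) atTop (nhds 0)
  simp only [SetLike.mem_coe] at hf
  have hf' : ∀ i, Tendsto (⇑(f i)) atTop (nhds (0 : X)) := fun i => hf i
  rw [NormedAddCommGroup.tendsto_nhds_zero]
  intro ε hε
  obtain ⟨i, hi⟩ : ∃ i, dist (f i) g < ε / 2 := by
    have h := (Metric.tendsto_atTop.mp hfg) (ε / 2) (by linarith)
    exact ⟨h.choose, h.choose_spec _ le_rfl⟩
  have h2 := NormedAddCommGroup.tendsto_nhds_zero.mp (hf' i) (ε / 2) (by linarith)
  filter_upwards [h2] with n hn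
  have hdd : ‖g n - f i n‖ ≤ dist (f i) g := by
    rw [dist_comm]
    simpa [dist_eq_norm] using (BoundedContinuousFunction.dist_coe_le_dist (f := g) (g := f i) n)
  calc ‖g n‖ ≤ ‖g n - f i n‖ + ‖f i n‖ := by
        simpa using norm_add_le (g n - f i n) (f i n)
    _ < ε / 2 + ε / 2 := by
        apply add_lt_add_of_le_of_lt _ hn
        exact le_trans hdd hi.le
    _ = ε := by ring

abbrev QS := (ℕ →ᵇ X) ⧸ nullS X

/-- subtracting a null sequence preserves the class. -/
lemma mk_eq_mk_of_sub_null {f g : ℕ →ᵇ X} (h : f - g ∈ nullS X) :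
    (Submodule.Quotient.mk f : QS X) = Submodule.Quotient.mk g := by
  rw [← sub_eq_zero, ← Submodule.Quotient.mk_sub]
  exact (Submodule.Quotient.mk_eq_zero _).mpr h

def shL : (ℕ →ᵇ X) →ₗ[ℂ] (ℕ →ᵇ X) where
  toFun f := f.compContinuous ⟨fun n => n + 1, continuous_of_discreteTopology⟩
  map_add' f g := by ext n; rfl
  map_smul' c f := by ext n; rfl

@[simp] lemma shL_apply (f : ℕ →ᵇ X) (n : ℕ) : shL X f n = f (n + 1) := rfl

lemma norm_shL_le (f : ℕ →ᵇ X) : ‖shL X f‖ ≤ ‖f‖ := by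
  refine (BoundedContinuousFunction.norm_le (norm_nonneg f)).mpr fun n => ?_
  exact BoundedContinuousFunction.norm_coe_le_norm f (n + 1)

lemma shL_mem_nullS {f : ℕ →ᵇ X} (hf : f ∈ nullS X) : shL X f ∈ nullS X := by
  have : Tendsto (fun n => f (n + 1)) atTop (nhds 0) := hf.comp (tendsto_add_atTop_nat 1)
  exact this

/-- The quotient norm is invariant under the shift. -/
lemma norm_mk_shL (f : ℕ →ᵇ X) :
    ‖(Submodule.Quotient.mk (shL X f) : QS X)‖ = ‖(Submodule.Quotient.mk f : QS X)‖ := by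
  apply le_antisymm
  · refine le_of_forall_pos_le_add fun ε hε => ?_
    obtain ⟨g, hg, hgn⟩ :=
      Submodule.Quotient.norm_mk_lt (Submodule.Quotient.mk f : QS X) hε
    have hnull : f - g ∈ nullS X := by
      rw [← Submodule.Quotient.mk_eq_zero (nullS X), Submodule.Quotient.mk_sub, hg, sub_self]
    have h2 : (Submodule.Quotient.mk (shL X f) : QS X) = Submodule.Quotient.mk (shL X g) := by
      apply mk_eq_mk_of_sub_null X
      rw [← map_sub]
      exact shL_mem_nullS X hnull
    rw [h2]
    calc ‖(Submodule.Quotient.mk (shL X g) : QS X)‖ ≤ ‖shL X g‖ :=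
          Submodule.Quotient.norm_mk_le _ _
      _ ≤ ‖g‖ := norm_shL_le X g
      _ ≤ ‖(Submodule.Quotient.mk f : QS X)‖ + ε := hgn.le
  · refine le_of_forall_pos_le_add fun ε hε => ?_
    obtain ⟨g, hg, hgn⟩ :=
      Submodule.Quotient.norm_mk_lt (Submodule.Quotient.mk (shL X f) : QS X) hε
    set h : ℕ →ᵇ X := shL X f - g with hh
    have hnull : h ∈ nullS X := by
      rw [hh, ← Submodule.Quotient.mk_eq_zero (nullS X), Submodule.Quotient.mk_sub, hg, sub_self]
    -- build h' with h' 0 = f 0, h' (k+1) = h k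
    have hbd : ∀ n : ℕ, ‖(fun n => Nat.casesOn n (f 0) (fun k => h k) : ℕ → X) n‖ ≤
        max ‖f 0‖ ‖h‖ := by
      intro n
      cases n with
      | zero => exact le_max_left _ _
      | succ k => exact le_trans (BoundedContinuousFunction.norm_coe_le_norm h k) (le_max_right _ _)
    set h' : ℕ →ᵇ X := BoundedContinuousFunction.ofNormedAddCommGroupDiscrete
      (fun n => Nat.casesOn n (f 0) (fun k => h k)) (max ‖f 0‖ ‖h‖) hbd with hh'
    have h'null : h' ∈ nullS X := by
      rw [mem_nullS_iff, ← tendsto_add_atTop_iff_nat 1]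
      have : (fun n => h' (n + 1)) = ⇑h := by funext k; rfl
      rw [this]
      exact hnull
    have hmkeq : (Submodule.Quotient.mk f : QS X) = Submodule.Quotient.mk (f - h') := by
      apply mk_eq_mk_of_sub_null X
      simpa using h'null
    rw [hmkeq]
    have hb : ‖f - h'‖ ≤ ‖g‖ := by
      refine (BoundedContinuousFunction.norm_le (norm_nonneg g)).mpr fun n => ?_
      cases n with
      | zero =>
          have : (f - h') 0 = 0 := by
            simp [hh', BoundedContinuousFunction.sub_apply]
          rw [this]; simp
      | succ k =>
          have : (f - h') (k + 1) = g k := by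
            have h1 : (f - h') (k + 1) = f (k + 1) - h k := by
              simp [hh', BoundedContinuousFunction.sub_apply]
            rw [h1, hh]
            simp [BoundedContinuousFunction.sub_apply]
          rw [this]
          exact BoundedContinuousFunction.norm_coe_le_norm g k
    calc ‖(Submodule.Quotient.mk (f - h') : QS X)‖ ≤ ‖f - h'‖ :=
          Submodule.Quotient.norm_mk_le _ _
      _ ≤ ‖g‖ := hb
      _ ≤ ‖(Submodule.Quotient.mk (shL X f) : QS X)‖ + ε := hgn.le

/-- Some coordinate of `f` has norm close to the quotient norm. -/
lemma exists_coord_small (f : ℕ →ᵇ X) {δ : ℝ} (hδ : 0 < δ) :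
    ∃ k : ℕ, ‖f k‖ < ‖(Submodule.Quotient.mk f : QS X)‖ + δ := by
  obtain ⟨g, hg, hgn⟩ :=
    Submodule.Quotient.norm_mk_lt (Submodule.Quotient.mk f : QS X) (half_pos hδ)
  have hnull : f - g ∈ nullS X := by
    rw [← Submodule.Quotient.mk_eq_zero (nullS X), Submodule.Quotient.mk_sub, hg, sub_self]
  have := NormedAddCommGroup.tendsto_nhds_zero.mp hnull (δ / 2) (half_pos hδ)
  obtain ⟨k, hk⟩ := this.exists
  refine ⟨k, ?_⟩
  have h1 : ‖f k‖ ≤ ‖g k‖ + ‖(f - g) k‖ := by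
    have : f k = g k + (f - g) k := by simp
    rw [this]; exact norm_add_le _ _
  calc ‖f k‖ ≤ ‖g k‖ + ‖(f - g) k‖ := h1
    _ < (‖(Submodule.Quotient.mk f : QS X)‖ + δ / 2) + δ / 2 :=
        add_lt_add_of_le_of_lt (le_trans (BoundedContinuousFunction.norm_coe_le_norm g k) hgn.le) hk
    _ = ‖(Submodule.Quotient.mk f : QS X)‖ + δ := by ring
lemma isometry_approx_eigen {Y : Type*} [NormedAddCommGroup Y] [NormedSpace ℂ Y]
    [CompleteSpace Y] [Nontrivial Y] (S : Y →L[ℂ] Y) (hiso : ∀ y, ‖S y‖ = ‖y‖) :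
    ∃ lam : ℂ, ‖lam‖ = 1 ∧ ∀ δ : ℝ, 0 < δ → ∃ y : Y, ‖y‖ = 1 ∧ ‖S y - lam • y‖ < δ := by
  obtain ⟨y0, hy0⟩ := exists_ne (0 : Y)
  have hy0n : 0 < ‖y0‖ := norm_pos_iff.mpr hy0
  have hSn : ∀ (n : ℕ) (y : Y), ‖(S ^ n) y‖ = ‖y‖ := by
    intro n
    induction n with
    | zero => intro y; simp
    | succ k ih =>
        intro y
        rw [pow_succ, ContinuousLinearMap.mul_apply, ih, hiso]
  have hSnorm : ∀ n : ℕ, ‖S ^ n‖ = 1 := by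
    intro n
    apply le_antisymm
    · refine ContinuousLinearMap.opNorm_le_bound _ zero_le_one fun y => ?_
      rw [hSn, one_mul]
    · have h := (S ^ n).le_opNorm y0
      rw [hSn] at h
      exact (le_mul_iff_one_le_left hy0n).mp h
  have hS1 : ‖S‖ ≤ 1 := by
    have := hSnorm 1
    simpa using this.le
  -- spectral radius is 1
  have hr : spectralRadius ℂ S = 1 := by
    have hgel := spectrum.pow_nnnorm_pow_one_div_tendsto_nhds_spectralRadius S
    have hconst : Tendsto (fun n : ℕ => (‖S ^ n‖₊ : ENNReal) ^ (1 / (n : ℝ))) atTop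
        (nhds (1 : ENNReal)) := by
      have : (fun n : ℕ => (‖S ^ n‖₊ : ENNReal) ^ (1 / (n : ℝ))) = fun _ => (1 : ENNReal) := by
        funext n
        have h1 : ‖S ^ n‖₊ = 1 := by
          ext
          simpa using hSnorm n
        rw [h1]
        simp
      rw [this]
      exact tendsto_const_nhds
    exact (tendsto_nhds_unique hgel hconst)
  obtain ⟨lam, hlamσ, hlamn⟩ := spectrum.exists_nnnorm_eq_spectralRadius S
  rw [hr] at hlamn
  have hlam1 : ‖lam‖ = 1 := by
    have : ‖lam‖₊ = 1 := by exact_mod_cast hlamn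
    simpa using congrArg (fun x : NNReal => (x : ℝ)) this
  refine ⟨lam, hlam1, ?_⟩
  intro δ hδ
  by_contra hcon
  push_neg at hcon
  -- S - lam is bounded below by δ
  have hlb : ∀ y : Y, δ * ‖y‖ ≤ ‖S y - lam • y‖ := by
    intro y
    rcases eq_or_ne y 0 with rfl | hy
    · simp
    · have hyn : 0 < ‖y‖ := norm_pos_iff.mpr hy
      set c : ℂ := ((‖y‖⁻¹ : ℝ) : ℂ) with hc
      have hcn : ‖c‖ = ‖y‖⁻¹ := by
        rw [hc, Complex.norm_real, norm_inv, norm_norm]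
      have hyc : ‖c • y‖ = 1 := by
        rw [norm_smul, hcn, inv_mul_cancel₀ hyn.ne']
      have h1 := hcon (c • y) hyc
      have h2 : S (c • y) - lam • (c • y) = c • (S y - lam • y) := by
        rw [map_smul, smul_comm lam c, smul_sub]
      rw [h2, norm_smul, hcn] at h1
      calc δ * ‖y‖ ≤ (‖y‖⁻¹ * ‖S y - lam • y‖) * ‖y‖ :=
            mul_le_mul_of_nonneg_right h1 (norm_nonneg y)
        _ = ‖S y - lam • y‖ := by field_simp
  set t : ℝ := δ / 4 with ht
  have ht0 : 0 < t := by positivity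
  set μ : ℂ := ((1 + t : ℝ) : ℂ) * lam with hμ
  have hμn : ‖μ‖ = 1 + t := by
    rw [hμ, norm_mul, Complex.norm_real, hlam1, mul_one, Real.norm_eq_abs, abs_of_pos (by linarith)]
  have hμσ : μ ∉ spectrum ℂ S := by
    intro h
    have := spectrum.norm_le_norm_of_mem h
    rw [hμn] at this
    linarith
  have hunit : IsUnit ((algebraMap ℂ (Y →L[ℂ] Y)) μ - S) := spectrum.notMem_iff.mp hμσ
  set u := hunit.unit with hu
  have hu_spec : (↑u : Y →L[ℂ] Y) = (algebraMap ℂ (Y →L[ℂ] Y)) μ - S := hunit.unit_spec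
  set R : Y →L[ℂ] Y := (↑u⁻¹ : Y →L[ℂ] Y) with hR
  have hμlam : ‖μ - lam‖ = t := by
    have : μ - lam = ((t : ℝ) : ℂ) * lam := by
      rw [hμ]; push_cast; ring
    rw [this, norm_mul, Complex.norm_real, hlam1, mul_one, Real.norm_eq_abs, abs_of_pos ht0]
  have hlow : ∀ y : Y, (δ / 2) * ‖y‖ ≤ ‖((algebraMap ℂ (Y →L[ℂ] Y)) μ - S) y‖ := by
    intro y
    have happ : ((algebraMap ℂ (Y →L[ℂ] Y)) μ - S) y = μ • y - S y := by
      rw [ContinuousLinearMap.sub_apply, Algebra.algebraMap_eq_smul_one]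
      simp
    rw [happ, norm_sub_rev]
    have hdecomp : S y - μ • y = (S y - lam • y) - (μ - lam) • y := by
      rw [sub_smul]; abel
    rw [hdecomp]
    have h1 : ‖(S y - lam • y) - (μ - lam) • y‖ ≥ ‖S y - lam • y‖ - ‖(μ - lam) • y‖ :=
      norm_sub_norm_le _ _
    have h2 : ‖(μ - lam) • y‖ = t * ‖y‖ := by rw [norm_smul, hμlam]
    have h3 := hlb y
    rw [h2] at h1
    have : δ * ‖y‖ - t * ‖y‖ ≤ ‖S y - lam • y - (μ - lam) • y‖ := by linarith
    calc (δ / 2) * ‖y‖ ≤ δ * ‖y‖ - t * ‖y‖ := by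
          rw [ht]; nlinarith [norm_nonneg y]
      _ ≤ _ := this
  have hRpt : ∀ z : Y, ‖R z‖ ≤ (2 / δ) * ‖z‖ := by
    intro z
    have happ : ((algebraMap ℂ (Y →L[ℂ] Y)) μ - S) (R z) = z := by
      have : (↑u * ↑u⁻¹ : Y →L[ℂ] Y) = 1 := u.mul_inv
      calc ((algebraMap ℂ (Y →L[ℂ] Y)) μ - S) (R z) = (↑u : Y →L[ℂ] Y) (R z) := by rw [hu_spec]
        _ = ((↑u * ↑u⁻¹ : Y →L[ℂ] Y)) z := rfl
        _ = z := by rw [this]; rfl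
    have hl := hlow (R z)
    rw [happ] at hl
    have h2δ : (0:ℝ) < 2 / δ := by positivity
    have h3 := mul_le_mul_of_nonneg_left hl h2δ.le
    have h4 : 2 / δ * (δ / 2 * ‖R z‖) = ‖R z‖ := by field_simp
    rw [h4] at h3
    exact h3
  have hRn : ‖R‖ ≤ 2 / δ :=
    ContinuousLinearMap.opNorm_le_bound _ (by positivity) hRpt
  have hsmall : ‖(μ - lam) • R‖ < 1 := by
    have hb : ‖(μ - lam) • R‖ ≤ 1 / 2 := by
      refine ContinuousLinearMap.opNorm_le_bound _ (by norm_num) fun z => ?_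
      have h1 : ((μ - lam) • R) z = (μ - lam) • (R z) := rfl
      rw [h1, norm_smul, hμlam]
      calc t * ‖R z‖ ≤ t * (2 / δ * ‖z‖) := mul_le_mul_of_nonneg_left (hRpt z) ht0.le
        _ = 1 / 2 * ‖z‖ := by rw [ht]; field_simp; ring
    linarith
  have hunit2 : IsUnit ((1 : Y →L[ℂ] Y) - (μ - lam) • R) := (Units.oneSub _ hsmall).isUnit
  have key : (algebraMap ℂ (Y →L[ℂ] Y)) lam - S =
      ((algebraMap ℂ (Y →L[ℂ] Y)) μ - S) * ((1 : Y →L[ℂ] Y) - (μ - lam) • R) := by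
    have h2 : ((algebraMap ℂ (Y →L[ℂ] Y)) μ - S) * R = 1 := by
      rw [← hu_spec]; exact u.mul_inv
    rw [mul_sub, mul_one, mul_smul_comm, h2]
    rw [Algebra.algebraMap_eq_smul_one (A := Y →L[ℂ] Y) μ,
      Algebra.algebraMap_eq_smul_one (A := Y →L[ℂ] Y) lam]
    rw [sub_smul]
    abel
  have : IsUnit ((algebraMap ℂ (Y →L[ℂ] Y)) lam - S) := by
    rw [key]; exact hunit.mul hunit2
  exact (spectrum.mem_iff.mp hlamσ) this


section Main

variable {Z : Type*} [NormedAddCommGroup Z] [NormedSpace ℂ Z] [CompleteSpace Z]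
variable (T : Z →L[ℂ] Z) (C : ℝ) (hC : ∀ (n : ℕ) (x : Z), ‖(T ^ n) x‖ ≤ C * ‖x‖)

def Phi (x : Z) : ℕ →ᵇ Z :=
  BoundedContinuousFunction.ofNormedAddCommGroupDiscrete (fun n => (T ^ n) x) (C * ‖x‖)
    (fun n => hC n x)

@[simp] lemma Phi_apply (x : Z) (n : ℕ) : Phi T C hC x n = (T ^ n) x := rfl

def Phib : Z →ₗ[ℂ] QS Z where
  toFun x := Submodule.Quotient.mk (Phi T C hC x)
  map_add' x y := by
    have h : Phi T C hC (x + y) = Phi T C hC x + Phi T C hC y := by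
      ext n; simp
    show Submodule.Quotient.mk (Phi T C hC (x + y)) =
      Submodule.Quotient.mk (Phi T C hC x) + Submodule.Quotient.mk (Phi T C hC y)
    rw [h, Submodule.Quotient.mk_add]
  map_smul' c x := by
    have h : Phi T C hC (c • x) = c • Phi T C hC x := by
      ext n; simp
    show Submodule.Quotient.mk (Phi T C hC (c • x)) =
      c • Submodule.Quotient.mk (Phi T C hC x)
    rw [h, Submodule.Quotient.mk_smul]

lemma Phib_apply (x : Z) : Phib T C hC x = Submodule.Quotient.mk (Phi T C hC x) := rfl

def pp (x : Z) : ℝ := ‖Phib T C hC x‖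

lemma pp_nonneg (x : Z) : 0 ≤ pp T C hC x := norm_nonneg _

lemma pp_le (x : Z) : pp T C hC x ≤ C * ‖x‖ := by
  have h0 : 0 ≤ C * ‖x‖ := le_trans (norm_nonneg _) (by simpa using hC 0 x)
  refine le_trans (Submodule.Quotient.norm_mk_le _ _) ?_
  exact (BoundedContinuousFunction.norm_le h0).mpr fun n => hC n x

lemma shL_Phi (x : Z) : shL Z (Phi T C hC x) = Phi T C hC (T x) := by
  ext n
  simp [pow_succ, ContinuousLinearMap.mul_apply]

lemma pp_T (x : Z) : pp T C hC (T x) = pp T C hC x := by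
  show ‖(Submodule.Quotient.mk (Phi T C hC (T x)) : QS Z)‖ = _
  rw [← shL_Phi]
  exact norm_mk_shL Z _

lemma pp_pow (k : ℕ) (x : Z) : pp T C hC ((T ^ k) x) = pp T C hC x := by
  induction k with
  | zero => rw [pow_zero, ContinuousLinearMap.one_apply]
  | succ m ih =>
      have h : (T ^ (m + 1)) x = T ((T ^ m) x) := by
        rw [pow_succ']; rfl
      rw [h, pp_T, ih]

lemma pp_le_orbit (x : Z) (n : ℕ) : pp T C hC x ≤ C * ‖(T ^ n) x‖ := by
  rw [← pp_pow T C hC n x]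
  exact pp_le T C hC _

lemma exists_orbit_small (x : Z) {δ : ℝ} (hδ : 0 < δ) :
    ∃ k : ℕ, ‖(T ^ k) x‖ < pp T C hC x + δ := by
  obtain ⟨k, hk⟩ := exists_coord_small Z (Phi T C hC x) hδ
  exact ⟨k, by simpa [pp, Phib_apply] using hk⟩

lemma pp_pos {u : Z} (hu : ¬ Tendsto (fun n : ℕ => (T ^ n) u) atTop (nhds 0)) :
    0 < pp T C hC u := by
  rcases (pp_nonneg T C hC u).lt_or_eq with h | h
  · exact h
  · exfalso
    apply hu
    have hmem : Phi T C hC u ∈ nullS Z := by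
      have hcl : Phi T C hC u ∈ closure ((nullS Z : Submodule ℂ (ℕ →ᵇ Z)) : Set (ℕ →ᵇ Z)) := by
        rw [Metric.mem_closure_iff]
        intro ε hε
        obtain ⟨g, hg, hgn⟩ :=
          Submodule.Quotient.norm_mk_lt (Submodule.Quotient.mk (Phi T C hC u) : QS Z)
            (half_pos hε)
        have hnull : Phi T C hC u - g ∈ nullS Z := by
          rw [← Submodule.Quotient.mk_eq_zero (nullS Z), Submodule.Quotient.mk_sub, hg, sub_self]
        refine ⟨Phi T C hC u - g, hnull, ?_⟩
        have : dist (Phi T C hC u) (Phi T C hC u - g) = ‖g‖ := by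
          rw [dist_eq_norm]
          congr 1
          abel
        rw [this]
        have hpp : ‖(Submodule.Quotient.mk (Phi T C hC u) : QS Z)‖ = 0 := h.symm
        rw [hpp] at hgn
        linarith
      rwa [(nullS_isClosed Z).closure_eq] at hcl
    exact hmem


lemma pp_smul (c : ℂ) (x : Z) : pp T C hC (c • x) = ‖c‖ * pp T C hC x := by
  show ‖Phib T C hC (c • x)‖ = ‖c‖ * ‖Phib T C hC x‖
  rw [map_smul]
  exact norm_smul c (Phib T C hC x)

lemma pp_triangle (x y : Z) : pp T C hC (x + y) ≤ pp T C hC x + pp T C hC y := by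
  show ‖Phib T C hC (x + y)‖ ≤ _
  rw [map_add]
  exact norm_add_le _ _

lemma pp_sub_le (x y z : Z) : pp T C hC (x - z) ≤ pp T C hC (x - y) + pp T C hC (y - z) := by
  have h : x - z = (x - y) + (y - z) := by abel
  rw [h]
  exact pp_triangle T C hC _ _

lemma pp_neg (x : Z) : pp T C hC (-x) = pp T C hC x := by
  show ‖Phib T C hC (-x)‖ = ‖Phib T C hC x‖
  rw [map_neg, norm_neg]

lemma pp_sum_le (s : Finset ℕ) (f : ℕ → Z) :
    pp T C hC (∑ j ∈ s, f j) ≤ ∑ j ∈ s, pp T C hC (f j) := by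
  show ‖Phib T C hC (∑ j ∈ s, f j)‖ ≤ _
  rw [map_sum]
  exact norm_sum_le _ _

def SbarL : QS Z →ₗ[ℂ] QS Z :=
  (nullS Z).liftQ ((nullS Z).mkQ.comp (shL Z)) (by
    intro f hf
    rw [LinearMap.mem_ker, LinearMap.comp_apply, Submodule.mkQ_apply]
    exact (Submodule.Quotient.mk_eq_zero _).mpr (shL_mem_nullS Z hf))

lemma SbarL_mk (f : ℕ →ᵇ Z) :
    SbarL (Z := Z) (Submodule.Quotient.mk f) = Submodule.Quotient.mk (shL Z f) := by
  show ((nullS Z).liftQ _ _) (Submodule.Quotient.mk f) = _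
  rw [Submodule.liftQ_apply, LinearMap.comp_apply, Submodule.mkQ_apply]

lemma norm_SbarL (q : QS Z) : ‖SbarL (Z := Z) q‖ = ‖q‖ := by
  obtain ⟨f, rfl⟩ := Submodule.Quotient.mk_surjective _ q
  rw [SbarL_mk]
  exact norm_mk_shL Z f

lemma exists_lam (u : Z) (hu : ¬ Tendsto (fun n : ℕ => (T ^ n) u) atTop (nhds 0)) :
    ∃ lam : ℂ, ‖lam‖ = 1 ∧ ∀ δ : ℝ, 0 < δ →
      ∃ x : Z, 1 - δ < pp T C hC x ∧ pp T C hC x < 1 + δ ∧ pp T C hC (T x - lam • x) < δ := by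
  classical
  set Rg : Set (QS Z) := Set.range (⇑(Phib T C hC)) with hRg
  set Yc : Submodule ℂ (QS Z) := (LinearMap.range (Phib T C hC)).topologicalClosure with hYc
  have hYcl : IsClosed (Yc : Set (QS Z)) := Submodule.isClosed_topologicalClosure _
  haveI : CompleteSpace ↥Yc := hYcl.completeSpace_coe
  have hmemu : Phib T C hC u ∈ Yc :=
    Submodule.le_topologicalClosure _ (LinearMap.mem_range_self _ u)
  have hune : Phib T C hC u ≠ 0 := by
    intro h
    have hp := pp_pos T C hC hu
    rw [pp, h, norm_zero] at hp
    exact lt_irrefl _ hp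
  haveI : Nontrivial ↥Yc := ⟨⟨⟨Phib T C hC u, hmemu⟩, 0, by
    intro h
    exact hune (by simpa using congrArg (fun z : ↥Yc => (z : QS Z)) h)⟩⟩
  have hPhiT : ∀ x : Z, SbarL (Z := Z) (Phib T C hC x) = Phib T C hC (T x) := by
    intro x
    rw [Phib_apply, SbarL_mk, shL_Phi, Phib_apply]
  have hYcset : (Yc : Set (QS Z)) = closure Rg := by
    rw [hYc, Submodule.topologicalClosure_coe, hRg, LinearMap.coe_range]
  have hSbarcont : Continuous (SbarL (Z := Z)) :=
    AddMonoidHomClass.continuous_of_bound (SbarL (Z := Z)) 1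
      (fun q => by rw [norm_SbarL, one_mul])
  have hmaps : ∀ q ∈ Yc, SbarL (Z := Z) q ∈ Yc := by
    intro q hq
    have h1 : Set.MapsTo (SbarL (Z := Z)) Rg Rg := by
      rintro _ ⟨x, rfl⟩
      exact ⟨T x, (hPhiT x).symm⟩
    have h2 := h1.closure hSbarcont
    have hq' : q ∈ closure Rg := by rw [← hYcset]; exact hq
    have h3 := h2 hq'
    rw [← SetLike.mem_coe, hYcset]
    exact h3
  let SYl : ↥Yc →ₗ[ℂ] ↥Yc :=
    { toFun := fun y => ⟨SbarL (Z := Z) ↑y, hmaps _ y.2⟩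
      map_add' := by intro a b; apply Subtype.ext; simp
      map_smul' := by intro c a; apply Subtype.ext; simp }
  have hSYl_coe : ∀ y : ↥Yc, ((SYl y : ↥Yc) : QS Z) = SbarL (Z := Z) ↑y := fun y => rfl
  have hSYl_norm : ∀ y : ↥Yc, ‖SYl y‖ = ‖y‖ := by
    intro y
    rw [Submodule.coe_norm, hSYl_coe, norm_SbarL, ← Submodule.coe_norm]
  let SY : ↥Yc →L[ℂ] ↥Yc :=
    ⟨SYl, AddMonoidHomClass.continuous_of_bound SYl 1 (fun y => by rw [one_mul]; exact (hSYl_norm y).le)⟩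
  have hSY_iso : ∀ y : ↥Yc, ‖SY y‖ = ‖y‖ := hSYl_norm
  have h1 := isometry_approx_eigen (Y := ↥Yc) SY
  have h2 := h1 (fun y => hSY_iso y)
  obtain ⟨lam, hlam1, happ⟩ := h2
  refine ⟨lam, hlam1, ?_⟩
  intro δ hδ
  have hδ3 : 0 < δ / 3 := by linarith
  obtain ⟨y, hy1, hyδ⟩ := happ (δ / 3) hδ3
  have hyY : (↑y : QS Z) ∈ closure Rg := by
    rw [← hYcset]
    exact y.2
  obtain ⟨q, hqRg, hqd⟩ := Metric.mem_closure_iff.mp hyY (δ / 3) hδ3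
  obtain ⟨x, rfl⟩ := hqRg
  have hxd : ‖Phib T C hC x - (↑y : QS Z)‖ < δ / 3 := by
    rw [← dist_eq_norm, dist_comm]
    exact hqd
  have hyn : ‖(↑y : QS Z)‖ = 1 := by rw [← Submodule.coe_norm, hy1]
  have hppx : pp T C hC x = ‖Phib T C hC x‖ := rfl
  have htri : ‖(↑y : QS Z)‖ ≤ ‖Phib T C hC x‖ + ‖Phib T C hC x - (↑y : QS Z)‖ := by
    have h1 := norm_sub_le (Phib T C hC x) (Phib T C hC x - (↑y : QS Z))
    have he : Phib T C hC x - (Phib T C hC x - (↑y : QS Z)) = (↑y : QS Z) := by abel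
    rwa [he] at h1
  have htri2 : ‖Phib T C hC x‖ ≤ ‖(↑y : QS Z)‖ + ‖Phib T C hC x - (↑y : QS Z)‖ := by
    have h1 := norm_add_le ((↑y : QS Z)) (Phib T C hC x - (↑y : QS Z))
    have he : (↑y : QS Z) + (Phib T C hC x - (↑y : QS Z)) = Phib T C hC x := by abel
    rwa [he] at h1
  rw [hyn] at htri htri2
  refine ⟨x, ?_, ?_, ?_⟩
  · rw [hppx]; linarith
  · rw [hppx]; linarith
  · -- pp (T x - lam • x) < δ
    have hkey : Phib T C hC (T x - lam • x) =
        SbarL (Z := Z) (Phib T C hC x) - lam • Phib T C hC x := by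
      rw [map_sub, map_smul, hPhiT]
    have hmid : ‖SbarL (Z := Z) (↑y : QS Z) - lam • (↑y : QS Z)‖ < δ / 3 := by
      have hcoe : ((SY y - lam • y : ↥Yc) : QS Z) =
          SbarL (Z := Z) (↑y : QS Z) - lam • (↑y : QS Z) := by
        push_cast [hSYl_coe]
        rfl
      rw [← hcoe, ← Submodule.coe_norm]
      exact hyδ
    have hterm1 : ‖SbarL (Z := Z) (Phib T C hC x) - SbarL (Z := Z) (↑y : QS Z)‖ < δ / 3 := by
      rw [← map_sub, norm_SbarL]
      exact hxd
    have hterm3 : ‖lam • (↑y : QS Z) - lam • Phib T C hC x‖ < δ / 3 := by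
      rw [← smul_sub, norm_smul, hlam1, one_mul, norm_sub_rev]
      exact hxd
    have hsplit : Phib T C hC (T x - lam • x) =
        (SbarL (Z := Z) (Phib T C hC x) - SbarL (Z := Z) (↑y : QS Z)) +
        (SbarL (Z := Z) (↑y : QS Z) - lam • (↑y : QS Z)) +
        (lam • (↑y : QS Z) - lam • Phib T C hC x) := by
      rw [hkey]; abel
    show ‖Phib T C hC (T x - lam • x)‖ < δ
    rw [hsplit]
    calc ‖_ + _ + _‖ ≤ ‖_ + _‖ + ‖_‖ := norm_add_le _ _
      _ ≤ ‖_‖ + ‖_‖ + ‖_‖ := by gcongr; exact norm_add_le _ _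
      _ < δ / 3 + δ / 3 + δ / 3 := by gcongr <;> assumption
      _ = δ := by ring

end Main

end SlowAux

open SlowAux Filter in
theorem stmt_4 (X : Type*) [NormedAddCommGroup X] [NormedSpace ℂ X] [CompleteSpace X]
    (T : X →L[ℂ] X) (C : ℝ) (hC : ∀ n : ℕ, ‖T ^ n‖ ≤ C)
    (h0 : {x : X | Filter.Tendsto (fun n : ℕ => (T ^ n) x) Filter.atTop (nhds 0)} ≠ Set.univ) :
    ∀ ε : ℝ, 0 < ε → ∃ (lam : ℂ) (x : X), ‖lam‖ = 1 ∧
      ‖T x - lam • x‖ < ε ∧ ∀ n : ℕ, 1 - ε < ‖(T ^ n) x‖ := by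
  intro ε hε
  classical
  set C' : ℝ := max C 1 with hC'def
  have hC'1 : (1 : ℝ) ≤ C' := le_max_right _ _
  have hC'0 : (0 : ℝ) < C' := lt_of_lt_of_le one_pos hC'1
  have hC' : ∀ (n : ℕ) (x : X), ‖(T ^ n) x‖ ≤ C' * ‖x‖ := fun n x =>
    le_trans ((T ^ n).le_opNorm x)
      (mul_le_mul_of_nonneg_right (le_trans (hC n) (le_max_left _ _)) (norm_nonneg x))
  obtain ⟨u, hu⟩ : ∃ u : X, ¬ Tendsto (fun n : ℕ => (T ^ n) u) atTop (nhds 0) := by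
    by_contra h
    push_neg at h
    exact h0 (Set.eq_univ_iff_forall.mpr fun x => h x)
  obtain ⟨lam, hlam1, happ⟩ := exists_lam T C' hC' u hu
  have hlam0 : lam ≠ 0 := by
    intro h; rw [h, norm_zero] at hlam1; norm_num at hlam1
  set ν : ℂ := lam⁻¹ with hν
  have hνn : ‖ν‖ = 1 := by rw [hν, norm_inv, hlam1]; norm_num
  -- choose K
  obtain ⟨K, hK⟩ : ∃ K : ℕ, 12 * C' ^ 3 / ε < K := exists_nat_gt _
  have hKpos : (0 : ℝ) < K := lt_trans (by positivity) hK
  have hK0 : K ≠ 0 := by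
    intro h; rw [h] at hKpos; norm_num at hKpos
  have hKR : ((K : ℝ)) ≠ 0 := Nat.cast_ne_zero.mpr hK0
  have hKC : ((K : ℂ)) ≠ 0 := Nat.cast_ne_zero.mpr hK0
  -- choose δ'
  set δ' : ℝ := 1 / (8 * (K + 1)) with hδ'def
  have hδ'pos : 0 < δ' := by positivity
  have hδ'le : δ' ≤ 1 / 8 := by
    rw [hδ'def, div_le_div_iff₀ (show (0:ℝ) < 8 * ((K:ℝ) + 1) by positivity)
      (show (0:ℝ) < 8 by norm_num)]
    nlinarith
  have hKδ' : (K : ℝ) * δ' ≤ 1 / 8 := by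
    rw [hδ'def, mul_one_div, div_le_div_iff₀ (show (0:ℝ) < 8 * ((K:ℝ) + 1) by positivity)
      (show (0:ℝ) < 8 by norm_num)]
    nlinarith
  obtain ⟨x, hx1, hx2, hx3⟩ := happ δ' hδ'pos
  -- replace x by a small-norm orbit point
  obtain ⟨k, hk⟩ := exists_orbit_small T C' hC' x hδ'pos
  set x' : X := (T ^ k) x with hx'def
  have hppx' : pp T C' hC' x' = pp T C' hC' x := pp_pow T C' hC' k x
  have hx'small : ‖x'‖ < 1 + 2 * δ' := by
    have h1 : ‖x'‖ < pp T C' hC' x + δ' := hk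
    linarith
  have hx'le3 : ‖x'‖ ≤ 3 := by
    have h1 : 2 * δ' ≤ 1 := by linarith
    linarith
  have hcommk : ∀ (m : ℕ) (v : X), T ((T ^ m) v) = (T ^ m) (T v) := by
    intro m v
    rw [← ContinuousLinearMap.mul_apply, ← pow_succ', pow_succ, ContinuousLinearMap.mul_apply]
  have hppTx' : pp T C' hC' (T x' - lam • x') < δ' := by
    have h1 : T x' - lam • x' = (T ^ k) (T x - lam • x) := by
      rw [hx'def, map_sub, map_smul, hcommk]
    rw [h1, pp_pow]
    exact hx3
  -- the averaged vector
  set g : ℕ → X := fun j => ν ^ j • (T ^ j) x' with hg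
  set z : X := (K : ℂ)⁻¹ • ∑ j ∈ Finset.range K, g j with hz
  have hlamν : ∀ j : ℕ, lam * ν ^ (j + 1) = ν ^ j := by
    intro j
    have h1 : lam * ν ^ (j + 1) = (lam * ν) * ν ^ j := by ring
    rw [h1, hν, mul_inv_cancel₀ hlam0, one_mul]
  -- telescoping identity
  have htel : T z - lam • z = (K : ℂ)⁻¹ • (lam • (g K - g 0)) := by
    have hTz : T z = (K : ℂ)⁻¹ • ∑ j ∈ Finset.range K, ν ^ j • (T ^ (j + 1)) x' := by
      rw [hz, map_smul, map_sum]
      congr 1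
      refine Finset.sum_congr rfl fun j _ => ?_
      rw [hg]
      simp only []
      rw [map_smul, hcommk]
      congr 1
    have hlz : lam • z = (K : ℂ)⁻¹ • ∑ j ∈ Finset.range K, lam • g j := by
      rw [hz, smul_comm, Finset.smul_sum]
    rw [hTz, hlz, ← smul_sub, ← Finset.sum_sub_distrib]
    congr 1
    have hterm : ∀ j, ν ^ j • (T ^ (j + 1)) x' - lam • g j = lam • (g (j + 1) - g j) := by
      intro j
      have hgj : g j = ν ^ j • (T ^ j) x' := rfl
      have hgj1 : g (j + 1) = ν ^ (j + 1) • (T ^ (j + 1)) x' := rfl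
      rw [hgj, hgj1, ← hlamν j]
      module
    rw [Finset.sum_congr rfl fun j _ => hterm j, ← Finset.smul_sum, Finset.sum_range_sub]
  have hTzn : ‖T z - lam • z‖ ≤ 6 * C' / K := by
    rw [htel]
    have h1 : ‖g K - g 0‖ ≤ 6 * C' := by
      have hgK : ‖g K‖ ≤ 3 * C' := by
        have hgKe : g K = ν ^ K • (T ^ K) x' := rfl
        rw [hgKe, norm_smul, norm_pow, hνn, one_pow, one_mul]
        calc ‖(T ^ K) x'‖ ≤ C' * ‖x'‖ := hC' K x'
          _ ≤ C' * 3 := mul_le_mul_of_nonneg_left hx'le3 hC'0.le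
          _ = 3 * C' := by ring
      have hg0 : ‖g 0‖ ≤ 3 * C' := by
        have hg0e : g 0 = x' := by
          show ν ^ 0 • (T ^ 0) x' = x'
          simp
        rw [hg0e]
        nlinarith
      calc ‖g K - g 0‖ ≤ ‖g K‖ + ‖g 0‖ := norm_sub_le _ _
        _ ≤ 3 * C' + 3 * C' := add_le_add hgK hg0
        _ = 6 * C' := by ring
    calc ‖(K : ℂ)⁻¹ • (lam • (g K - g 0))‖
        = ((K : ℝ))⁻¹ * ‖g K - g 0‖ := by
          rw [norm_smul, norm_smul, hlam1, one_mul, norm_inv, Complex.norm_natCast]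
      _ ≤ ((K : ℝ))⁻¹ * (6 * C') := mul_le_mul_of_nonneg_left h1 (by positivity)
      _ = 6 * C' / K := by field_simp
  -- pp z is large
  have hppdiff : ∀ j : ℕ, pp T C' hC' (x' - ν ^ j • (T ^ j) x') ≤ j * δ' := by
    intro j
    induction j with
    | zero =>
        have h00 : x' - ν ^ 0 • (T ^ 0) x' = 0 := by simp
        rw [h00]
        have hz0 : pp T C' hC' 0 = 0 := by
          show ‖Phib T C' hC' 0‖ = 0
          rw [map_zero, norm_zero]
        rw [hz0]
        simp
    | succ m ih =>
        have hmid : pp T C' hC' (ν ^ m • (T ^ m) x' - ν ^ (m + 1) • (T ^ (m + 1)) x') ≤ δ' := by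
          have he : ν ^ m • (T ^ m) x' - ν ^ (m + 1) • (T ^ (m + 1)) x'
              = ν ^ (m + 1) • (-((T ^ m) (T x' - lam • x'))) := by
            have h1 : (T ^ m) (T x' - lam • x') = (T ^ m) (T x') - lam • (T ^ m) x' := by
              rw [map_sub, map_smul]
            have hB : (T ^ (m + 1)) x' = (T ^ m) (T x') := by
              rw [pow_succ, ContinuousLinearMap.mul_apply]
            rw [h1, hB, ← hlamν m]
            module
          rw [he, pp_smul, norm_pow, hνn, one_pow, one_mul, pp_neg, pp_pow]
          exact hppTx'.le
        calc pp T C' hC' (x' - ν ^ (m + 1) • (T ^ (m + 1)) x')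
            ≤ pp T C' hC' (x' - ν ^ m • (T ^ m) x')
              + pp T C' hC' (ν ^ m • (T ^ m) x' - ν ^ (m + 1) • (T ^ (m + 1)) x') :=
              pp_sub_le T C' hC' _ _ _
          _ ≤ m * δ' + δ' := add_le_add ih hmid
          _ = ((m + 1 : ℕ) : ℝ) * δ' := by push_cast; ring
  have hxz : pp T C' hC' (x' - z) ≤ K * δ' := by
    have hid : x' - z = (K : ℂ)⁻¹ • ∑ j ∈ Finset.range K, (x' - g j) := by
      rw [Finset.sum_sub_distrib, Finset.sum_const, Finset.card_range, smul_sub]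
      have h1 : (K : ℂ)⁻¹ • (K • x') = x' := by
        rw [← Nat.cast_smul_eq_nsmul ℂ, smul_smul, inv_mul_cancel₀ hKC, one_smul]
      rw [h1, hz]
    rw [hid, pp_smul, norm_inv, Complex.norm_natCast]
    have hsum : pp T C' hC' (∑ j ∈ Finset.range K, (x' - g j)) ≤ K * (K * δ') := by
      refine le_trans (pp_sum_le T C' hC' _ _) ?_
      have heach : ∀ j ∈ Finset.range K, pp T C' hC' (x' - g j) ≤ K * δ' := by
        intro j hj
        have hgj : g j = ν ^ j • (T ^ j) x' := rfl
        rw [hgj]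
        refine le_trans (hppdiff j) ?_
        have hjK : (j : ℝ) ≤ K := le_of_lt (by exact_mod_cast Finset.mem_range.mp hj)
        nlinarith
      calc ∑ j ∈ Finset.range K, pp T C' hC' (x' - g j)
          ≤ ∑ _j ∈ Finset.range K, K * δ' := Finset.sum_le_sum heach
        _ = K * (K * δ') := by rw [Finset.sum_const, Finset.card_range, nsmul_eq_mul]
    calc ((K : ℝ))⁻¹ * pp T C' hC' (∑ j ∈ Finset.range K, (x' - g j))
        ≤ ((K : ℝ))⁻¹ * (K * (K * δ')) := mul_le_mul_of_nonneg_left hsum (by positivity)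
      _ = K * δ' := by field_simp
  have hppz : 1 / 2 ≤ pp T C' hC' z := by
    have h1 : pp T C' hC' x' ≤ pp T C' hC' z + pp T C' hC' (x' - z) := by
      have h2 := pp_triangle T C' hC' z (x' - z)
      have h3 : z + (x' - z) = x' := by abel
      rwa [h3] at h2
    have h4 : 1 - δ' < pp T C' hC' x' := by rw [hppx']; exact hx1
    linarith
  have horb : ∀ n : ℕ, 1 / (2 * C') ≤ ‖(T ^ n) z‖ := by
    intro n
    have h1 := pp_le_orbit T C' hC' z n
    have h2 : 1 / 2 ≤ C' * ‖(T ^ n) z‖ := le_trans hppz h1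
    rw [div_le_iff₀ (by positivity)]
    nlinarith
  -- flatten the orbit at a near-infimum point
  set m₀ : ℝ := ⨅ n : ℕ, ‖(T ^ n) z‖ with hm₀
  have hbdd : BddBelow (Set.range fun n : ℕ => ‖(T ^ n) z‖) :=
    ⟨1 / (2 * C'), by rintro _ ⟨n, rfl⟩; exact horb n⟩
  have hm₀lb : 1 / (2 * C') ≤ m₀ := le_ciInf horb
  have hm₀pos : 0 < m₀ := lt_of_lt_of_le (by positivity) hm₀lb
  have hlt : m₀ < m₀ * (1 + ε) := by nlinarith
  obtain ⟨n₀, hn₀⟩ := exists_lt_of_ciInf_lt (α := ℝ) (f := fun n : ℕ => ‖(T ^ n) z‖) hlt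
  have hn₀pos : 0 < ‖(T ^ n₀) z‖ := lt_of_lt_of_le (by positivity) (horb n₀)
  set c : ℂ := ((‖(T ^ n₀) z‖⁻¹ : ℝ) : ℂ) with hc
  have hcn : ‖c‖ = ‖(T ^ n₀) z‖⁻¹ := by
    rw [hc, Complex.norm_real, norm_inv, norm_norm]
  set w : X := c • (T ^ n₀) z with hw
  refine ⟨lam, w, hlam1, ?_, ?_⟩
  · -- approximate eigenvector in norm
    have h1 : T w - lam • w = c • ((T ^ n₀) (T z - lam • z)) := by
      have e1 : T w = c • ((T ^ n₀) (T z)) := by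
        rw [hw, map_smul T c ((T ^ n₀) z), hcommk n₀ z]
      have e2 : lam • w = c • (lam • (T ^ n₀) z) := by
        rw [hw, smul_comm lam c]
      have e3 : (T ^ n₀) (T z - lam • z) = (T ^ n₀) (T z) - lam • (T ^ n₀) z := by
        rw [map_sub (T ^ n₀) (T z) (lam • z), map_smul (T ^ n₀) lam z]
      rw [e1, e2, e3, ← smul_sub]
    rw [h1, norm_smul, hcn]
    have h2 : ‖(T ^ n₀) (T z - lam • z)‖ ≤ C' * (6 * C' / K) :=
      le_trans (hC' n₀ _) (mul_le_mul_of_nonneg_left hTzn hC'0.le)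
    have h3 : ‖(T ^ n₀) z‖⁻¹ ≤ 2 * C' := by
      rw [inv_le_comm₀ hn₀pos (by positivity)]
      calc (2 * C')⁻¹ = 1 / (2 * C') := by rw [one_div]
        _ ≤ ‖(T ^ n₀) z‖ := horb n₀
    calc ‖(T ^ n₀) z‖⁻¹ * ‖(T ^ n₀) (T z - lam • z)‖
        ≤ (2 * C') * (C' * (6 * C' / K)) :=
          mul_le_mul h3 h2 (norm_nonneg _) (by positivity)
      _ = 12 * C' ^ 3 / K := by ring
      _ < ε := by
          rw [div_lt_iff₀ hKpos]
          have h4 := (div_lt_iff₀ hε).mp hK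
          linarith
  · -- slow orbit
    intro n
    have h1 : (T ^ n) w = c • (T ^ (n + n₀)) z := by
      rw [hw, map_smul, ← ContinuousLinearMap.mul_apply, ← pow_add]
    rw [h1, norm_smul, hcn]
    have h2 : m₀ ≤ ‖(T ^ (n + n₀)) z‖ := ciInf_le hbdd (n + n₀)
    have h3 : m₀ / (m₀ * (1 + ε)) < ‖(T ^ n₀) z‖⁻¹ * ‖(T ^ (n + n₀)) z‖ := by
      have hratio : m₀ / (m₀ * (1 + ε)) < m₀ / ‖(T ^ n₀) z‖ :=
        div_lt_div_of_pos_left hm₀pos hn₀pos hn₀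
      calc m₀ / (m₀ * (1 + ε)) < m₀ / ‖(T ^ n₀) z‖ := hratio
        _ = ‖(T ^ n₀) z‖⁻¹ * m₀ := by rw [div_eq_mul_inv, mul_comm]
        _ ≤ ‖(T ^ n₀) z‖⁻¹ * ‖(T ^ (n + n₀)) z‖ :=
            mul_le_mul_of_nonneg_left h2 (inv_nonneg.mpr (norm_nonneg _))
    have h4 : m₀ / (m₀ * (1 + ε)) = 1 / (1 + ε) := by
      rw [div_eq_div_iff (mul_pos hm₀pos (by linarith : (0:ℝ) < 1 + ε)).ne' (by linarith : (0:ℝ) < 1 + ε).ne']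
      ring
    have h5 : 1 - ε < 1 / (1 + ε) := by
      rw [lt_div_iff₀ (by linarith)]
      nlinarith
    rw [h4] at h3
    linarith
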